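/- Let λ̂₀, λ̂₁, λ̂₂, μ̂₁, μ̂₂ > 0, λ̂ = λ̂₀+λ̂₁+λ̂₂, and ρ = λ̂/(μ̂₁+μ̂₂) with 0 < ρ. Then δ₊ = (λ̂₂ + ρ²μ̂₁)/(λ̂₀ + λ̂₁ + ρ²μ̂₂) satisfies the equation λ̂ + μ̂₁ + μ̂₂ = (λ̂₂/ρ + μ̂₁ρ)/δ₊ + ((λ̂₀+λ̂₁)/ρ + μ̂₂ρ)δ₊. -/

import Mathlib

theorem asymmetric_delta_plus_solves
    (lam0h lam1h lam2h mu1h mu2h lamh rho deltap : ℝ)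
    (h0 : 0 < lam0h) (h1 : 0 < lam1h) (h2 : 0 < lam2h)
    (hm1 : 0 < mu1h) (hm2 : 0 < mu2h)
    (hlam : lamh = lam0h + lam1h + lam2h)
    (hrho : rho = lamh / (mu1h + mu2h)) (hrho0 : 0 < rho)
    (hdelta : deltap = (lam2h + rho ^ 2 * mu1h) / (lam0h + lam1h + rho ^ 2 * mu2h)) :
    lamh + mu1h + mu2h = (lam2h / rho + mu1h * rho) / deltap
      + ((lam0h + lam1h) / rho + mu2h * rho) * deltap := by
  have hmu : (0:ℝ) < mu1h + mu2h := by linarith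
  have key : rho * (mu1h + mu2h) = lamh := by
    rw [hrho]; field_simp
  have hA : (0:ℝ) < lam2h + rho ^ 2 * mu1h := by positivity
  have hB : (0:ℝ) < lam0h + lam1h + rho ^ 2 * mu2h := by positivity
  have hd : deltap ≠ 0 := by rw [hdelta]; positivity
  rw [hdelta]
  field_simp
  linear_combination (1 - rho) * key + hlam
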